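/- Let F and G be disjoint closed subsets of ℝ² such that both ℝ² \ F and ℝ² \ G are connected. Then ℝ² \ (F ∪ G) is connected. -/

import Mathlib

set_option maxHeartbeats 1000000

open Set Metric Complex

local notation "X" => EuclideanSpace ℝ (Fin 2)

lemma intValued_constOn {Z : Type*} [TopologicalSpace Z] {s : Set Z} (hs : IsPreconnected s)
    {h : Z → ℝ} (hc : ContinuousOn h s) (hint : ∀ x ∈ s, ∃ n : ℤ, h x = n)
    {x y : Z} (hx : x ∈ s) (hy : y ∈ s) : h x = h y := by
  have key : ∀ u ∈ s, ∀ v ∈ s, h u < h v → False := by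
    intro u hu v hv hlt
    obtain ⟨m, hm⟩ := hint u hu
    obtain ⟨n, hn⟩ := hint v hv
    have hmn : m < n := by exact_mod_cast hm ▸ hn ▸ hlt
    have ht : (m : ℝ) + 1/2 ∈ Icc (h u) (h v) := by
      constructor
      · rw [hm]; linarith
      · rw [hn]
        have : (m : ℝ) + 1 ≤ n := by exact_mod_cast hmn
        linarith
    obtain ⟨z, hz, hz2⟩ := hs.intermediate_value hu hv hc ht
    obtain ⟨p, hp⟩ := hint z hz
    rw [hp] at hz2
    have : (2 * p : ℝ) = 2 * m + 1 := by rw [hz2]; ring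
    have : (2 * p : ℤ) = 2 * m + 1 := by exact_mod_cast this
    omega
  rcases lt_trichotomy (h x) (h y) with h1 | h1 | h1
  · exact absurd h1 (fun h1 => key x hx y hy h1)
  · exact h1
  · exact absurd h1 (fun h1 => key y hy x hx h1)

lemma prod_div_telescope (h : ℕ → ℂ) (hn : ∀ k, h k ≠ 0) :
    ∀ n, (∏ i ∈ Finset.range n, h (i+1) / h i) = h n / h 0 := by
  intro n
  induction n with
  | zero => simp [div_self (hn 0)]
  | succ n ih =>
    rw [Finset.prod_range_succ, ih]
    rw [div_mul_div_comm, mul_comm (h n) (h (n+1)), mul_comm (h 0) (h n),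
      mul_comm (h (n+1)) (h n)]
    exact mul_div_mul_left _ _ (hn n)


lemma exists_log_on_ball (f : X → ℂ) (hf : Continuous f) (h0 : ∀ x, f x ≠ 0) (n : ℕ) :
    ∃ g : X → ℂ, ContinuousOn g (closedBall 0 (n : ℝ)) ∧ g 0 = Complex.log (f 0) ∧
      ∀ x ∈ closedBall 0 (n : ℝ), Complex.exp (g x) = f x := by
  classical
  set K : Set X := closedBall 0 (n : ℝ) with hKdef
  have hK : IsCompact K := isCompact_closedBall _ _
  have h0K : (0 : X) ∈ K := mem_closedBall_self (by positivity)
  -- minimum of ‖f‖ on K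
  obtain ⟨x₀, hx₀, hmin⟩ := hK.exists_isMinOn ⟨0, h0K⟩ (hf.norm.continuousOn)
  set ε : ℝ := ‖f x₀‖ with hε
  have hεpos : 0 < ε := norm_pos_iff.mpr (h0 x₀)
  -- uniform continuity of (t, x) ↦ f (t • x) on [0,1] × K
  set H : ℝ × X → ℂ := fun p => f (p.1 • p.2) with hHdef
  have hHc : Continuous H := hf.comp (continuous_fst.smul continuous_snd)
  have hC : IsCompact ((Icc (0:ℝ) 1) ×ˢ K) := isCompact_Icc.prod hK
  have hUC := hC.uniformContinuousOn_of_continuous hHc.continuousOn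
  rw [Metric.uniformContinuousOn_iff] at hUC
  obtain ⟨δ, hδpos, hδ⟩ := hUC ε hεpos
  obtain ⟨N, hN⟩ := exists_nat_gt (1/δ)
  have hNpos : 0 < N := by
    have : (0:ℝ) < N := lt_trans (by positivity) hN
    exact_mod_cast this
  -- membership facts
  have hmem : ∀ x ∈ K, ∀ k : ℕ, k ≤ N → ((k : ℝ)/N) • x ∈ K := by
    intro x hx k hk
    rw [hKdef, mem_closedBall_zero_iff] at hx ⊢
    rw [norm_smul]
    have h1 : (k:ℝ)/N ≤ 1 := by
      rw [div_le_one (by exact_mod_cast hNpos)]; exact_mod_cast hk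
    have h2 : (0:ℝ) ≤ (k:ℝ)/N := by positivity
    calc ‖(k:ℝ)/N‖ * ‖x‖ ≤ 1 * ‖x‖ := by
          apply mul_le_mul_of_nonneg_right _ (norm_nonneg x)
          rwa [Real.norm_eq_abs, _root_.abs_of_nonneg h2]
      _ ≤ (n:ℝ) := by rwa [one_mul]
  -- key estimate: consecutive quotients are close to 1
  have hq : ∀ x ∈ K, ∀ k : ℕ, k < N →
      ‖f ((((k:ℝ)+1)/N) • x) / f (((k:ℝ)/N) • x) - 1‖ < 1 := by
    intro x hx k hk
    set a := f ((((k:ℝ)+1)/N) • x)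
    set b := f (((k:ℝ)/N) • x)
    have hb : b ≠ 0 := h0 _
    have hdist : dist a b < ε := by
      have hp1 : (((k:ℝ)+1)/N, x) ∈ (Icc (0:ℝ) 1) ×ˢ K := by
        refine ⟨⟨by positivity, ?_⟩, hx⟩
        rw [div_le_one (by exact_mod_cast hNpos)]
        exact_mod_cast hk
      have hp2 : ((k:ℝ)/N, x) ∈ (Icc (0:ℝ) 1) ×ˢ K := by
        refine ⟨⟨by positivity, ?_⟩, hx⟩
        rw [div_le_one (by exact_mod_cast hNpos)]
        exact_mod_cast le_of_lt hk
      have hd : dist ((((k:ℝ)+1)/N, x) : ℝ × X) (((k:ℝ)/N, x)) < δ := by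
        rw [Prod.dist_eq]
        simp only [dist_self]
        have : dist (((k:ℝ)+1)/N) ((k:ℝ)/N) = 1/N := by
          rw [Real.dist_eq]
          have : ((k:ℝ)+1)/N - (k:ℝ)/N = 1/N := by ring
          rw [this, abs_of_pos (by positivity)]
        rw [this]
        have h1N : (1:ℝ)/N < δ := by
          rw [div_lt_iff₀ (by exact_mod_cast hNpos)]
          rw [div_lt_iff₀ hδpos] at hN
          linarith [hN]
        simpa using h1N
      have h3 := hδ ((((k:ℝ)+1)/N, x)) hp1 (((k:ℝ)/N, x)) hp2 hd
      simpa only [hHdef] using h3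
    have hεb : ε ≤ ‖b‖ := isMinOn_iff.mp hmin _ (hmem x hx k (le_of_lt hk))
    have : ‖a/b - 1‖ = ‖a - b‖ / ‖b‖ := by
      rw [div_sub_one hb, norm_div]
    rw [this, div_lt_one (lt_of_lt_of_le hεpos hεb)]
    calc ‖a - b‖ = dist a b := (dist_eq_norm a b).symm
      _ < ε := hdist
      _ ≤ ‖b‖ := hεb
  -- the candidate logarithm
  set g : X → ℂ := fun x => Complex.log (f 0) +
      ∑ k ∈ Finset.range N, Complex.log (f ((((k:ℝ)+1)/N) • x) / f (((k:ℝ)/N) • x)) with hgdef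
  have hslit : ∀ x ∈ K, ∀ k : ℕ, k < N →
      f ((((k:ℝ)+1)/N) • x) / f (((k:ℝ)/N) • x) ∈ Complex.slitPlane := by
    intro x hx k hk
    set q := f ((((k:ℝ)+1)/N) • x) / f (((k:ℝ)/N) • x) with hqdef
    have h1 := hq x hx k hk
    rw [Complex.mem_slitPlane_iff]
    left
    have : (1 - q).re ≤ ‖1 - q‖ := Complex.re_le_norm _
    have habs : ‖1 - q‖ < 1 := by rwa [← norm_neg, neg_sub] at h1
    have : (1:ℝ) - q.re < 1 := by
      have h2 : (1 - q).re = 1 - q.re := by simp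
      linarith [lt_of_le_of_lt this habs, h2 ▸ (lt_of_le_of_lt this habs)]
    linarith
  refine ⟨g, ?_, ?_, ?_⟩
  · -- continuity on K
    apply ContinuousOn.add continuousOn_const
    apply continuousOn_finset_sum
    intro k hk
    rw [Finset.mem_range] at hk
    intro x hx
    apply ContinuousWithinAt.clog
    · apply Continuous.continuousWithinAt
      exact ((hf.comp (continuous_const_smul _)).div
        (hf.comp (continuous_const_smul _)) (fun y => h0 _))
    · exact hslit x hx k hk
  · -- value at 0
    rw [hgdef]
    simp only [smul_zero]
    rw [Finset.sum_congr rfl (fun k _ => by rw [div_self (h0 0), Complex.log_one])]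
    simp
  · -- exponential property
    intro x hx
    rw [hgdef]
    rw [Complex.exp_add, Complex.exp_sum, Complex.exp_log (h0 0)]
    have hterm : ∀ k ∈ Finset.range N,
        Complex.exp (Complex.log (f ((((k:ℝ)+1)/N) • x) / f (((k:ℝ)/N) • x)))
          = f ((((k:ℝ)+1)/N) • x) / f (((k:ℝ)/N) • x) := by
      intro k _
      exact Complex.exp_log (div_ne_zero (h0 _) (h0 _))
    rw [Finset.prod_congr rfl hterm]
    set h : ℕ → ℂ := fun k => f (((k:ℝ)/N) • x) with hhdef
    have hcast : ∀ k : ℕ, f ((((k:ℝ)+1)/N) • x) = h (k+1) := by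
      intro k; rw [hhdef]; push_cast; ring_nf
    rw [Finset.prod_congr rfl (fun k _ => by rw [hcast k])]
    have htel := prod_div_telescope h (fun k => h0 _) N
    have hN0 : ((N:ℝ)/N) = 1 := div_self (Nat.cast_ne_zero.mpr hNpos.ne')
    have h1 : h N = f x := by simp only [hhdef, hN0, one_smul]
    have h2 : h 0 = f 0 := by simp only [hhdef, Nat.cast_zero, zero_div, zero_smul]
    rw [htel, h1, h2, mul_div_cancel₀ _ (h0 0)]

lemma exists_log_global (f : X → ℂ) (hf : Continuous f) (h0 : ∀ x, f x ≠ 0) :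
    ∃ g : X → ℂ, Continuous g ∧ ∀ x, Complex.exp (g x) = f x := by
  classical
  choose gs hgsc hgs0 hgse using exists_log_on_ball f hf h0
  -- agreement of the lifts
  have agree : ∀ m n : ℕ, m ≤ n → ∀ x ∈ closedBall (0:X) (m:ℝ), gs m x = gs n x := by
    intro m n hmn x hx
    have hsub : closedBall (0:X) (m:ℝ) ⊆ closedBall 0 (n:ℝ) :=
      closedBall_subset_closedBall (by exact_mod_cast hmn)
    -- difference divided by 2π is integer valued
    set D : X → ℝ := fun y => (gs n y - gs m y).im / (2 * Real.pi) with hDdef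
    have hint : ∀ y ∈ closedBall (0:X) (m:ℝ), ∃ k : ℤ, D y = k := by
      intro y hy
      have he : Complex.exp (gs n y) = Complex.exp (gs m y) := by
        rw [hgse n y (hsub hy), hgse m y hy]
      obtain ⟨k, hk⟩ := Complex.exp_eq_exp_iff_exists_int.mp he
      refine ⟨k, ?_⟩
      rw [hDdef]
      have hd : gs n y - gs m y = k * (2 * Real.pi * Complex.I) := by
        rw [hk]; ring
      simp only []
      rw [hd]
      have him : ((k : ℂ) * (2 * Real.pi * Complex.I)).im = k * (2 * Real.pi) := by
        simp [Complex.mul_im]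
      rw [him, mul_div_assoc, div_self (by positivity), mul_one]
    have hDc : ContinuousOn D (closedBall (0:X) (m:ℝ)) := by
      exact (Complex.continuous_im.comp_continuousOn
        (((hgsc n).mono hsub).sub (hgsc m))).div_const _
    have hpre : IsPreconnected (closedBall (0:X) (m:ℝ)) :=
      (convex_closedBall _ _).isPreconnected
    have h0m : (0:X) ∈ closedBall (0:X) (m:ℝ) := mem_closedBall_self (by positivity)
    have hD0 : D 0 = 0 := by
      rw [hDdef]
      simp only [hgs0 n, hgs0 m, sub_self, Complex.zero_im, zero_div]
    have := intValued_constOn hpre hDc hint hx h0m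
    rw [hD0] at this
    -- conclude gs n x = gs m x
    obtain ⟨k, hk⟩ := hint x hx
    have hkz : (k : ℝ) = 0 := by rw [← hk, this]
    have him0 : (gs n x - gs m x).im = 0 := by
      have h2π : (2 * Real.pi) ≠ 0 := by positivity
      have := hk
      rw [hDdef] at this
      simp only at this
      rw [hkz] at this
      field_simp at this
      simpa using this
    -- real parts: |exp| equal
    have hre0 : (gs n x - gs m x).re = 0 := by
      have h1 : Real.exp ((gs n x).re) = ‖f x‖ := by
        rw [← Complex.norm_exp, hgse n x (hsub hx)]
      have h2 : Real.exp ((gs m x).re) = ‖f x‖ := by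
        rw [← Complex.norm_exp, hgse m x hx]
      have : (gs n x).re = (gs m x).re := Real.exp_injective (h1.trans h2.symm)
      simp [Complex.sub_re, this]
    have : gs n x - gs m x = 0 := Complex.ext hre0 him0
    exact (sub_eq_zero.mp this).symm
  -- glue
  set g : X → ℂ := fun x => gs (⌊‖x‖⌋₊ + 1) x with hgdef
  have hexp : ∀ x, Complex.exp (g x) = f x := by
    intro x
    apply hgse
    rw [mem_closedBall_zero_iff]
    push_cast
    exact le_of_lt (Nat.lt_floor_add_one ‖x‖)
  have hxmem : ∀ x : X, x ∈ closedBall (0:X) ((⌊‖x‖⌋₊ + 1 : ℕ) : ℝ) := by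
    intro x
    rw [mem_closedBall_zero_iff]
    push_cast
    exact le_of_lt (Nat.lt_floor_add_one ‖x‖)
  refine ⟨g, ?_, hexp⟩
  rw [continuous_iff_continuousAt]
  intro x₀
  set n : ℕ := ⌊‖x₀‖⌋₊ + 2 with hndef
  have hx₀b : x₀ ∈ ball (0:X) (n:ℝ) := by
    rw [mem_ball_zero_iff, hndef]
    push_cast
    linarith [Nat.lt_floor_add_one ‖x₀‖]
  have heq : ∀ y ∈ ball (0:X) (n:ℝ), g y = gs n y := by
    intro y hy
    rw [mem_ball_zero_iff] at hy
    have hle : ⌊‖y‖⌋₊ + 1 ≤ n := by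
      rw [hndef]
      have h2 : ⌊‖y‖⌋₊ < n := (Nat.floor_lt (norm_nonneg _)).mpr (by exact_mod_cast hy)
      omega
    exact agree _ n hle y (hxmem y)
  have hcn : ContinuousAt (gs n) x₀ := by
    apply (hgsc n).continuousAt
    exact Filter.mem_of_superset (isOpen_ball.mem_nhds hx₀b) ball_subset_closedBall
  apply ContinuousAt.congr hcn
  apply Filter.eventuallyEq_of_mem (isOpen_ball.mem_nhds hx₀b)
  intro y hy
  exact (heq y hy).symm

theorem stmt_8 (F G : Set (EuclideanSpace ℝ (Fin 2)))
    (hF : IsClosed F) (hG : IsClosed G) (hdisj : Disjoint F G)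
    (hFc : IsConnected Fᶜ) (hGc : IsConnected Gᶜ) :
    IsConnected (F ∪ G)ᶜ := by
  classical
  constructor
  · -- nonempty
    by_contra hne
    rw [Set.not_nonempty_iff_eq_empty, Set.compl_empty_iff] at hne
    have h1 : Fᶜ = G := by
      apply subset_antisymm
      · intro x hx
        rcases (hne ▸ Set.mem_univ x : x ∈ F ∪ G) with h | h
        · exact absurd h hx
        · exact h
      · intro x hx
        exact fun hxF => Set.disjoint_left.mp hdisj hxF hx
    have hclopen : IsClopen Fᶜ := ⟨h1 ▸ hG, hF.isOpen_compl⟩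
    rcases isClopen_iff.mp hclopen with h | h
    · exact absurd (h ▸ hFc.nonempty) (by simp)
    · have : Gᶜ = (∅ : Set (EuclideanSpace ℝ (Fin 2))) := by
        rw [← h1, h, Set.compl_univ]
      exact absurd (this ▸ hGc.nonempty) (by simp)
  · -- preconnected
    by_contra hnc
    rw [IsPreconnected] at hnc
    push_neg at hnc
    obtain ⟨u, v, hu, hv, hcov, hWu, hWv, hemp⟩ := hnc
    set W : Set (EuclideanSpace ℝ (Fin 2)) := (F ∪ G)ᶜ with hWdef
    have hWopen : IsOpen W := (hF.union hG).isOpen_compl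
    set A : Set (EuclideanSpace ℝ (Fin 2)) := W ∩ u with hAdef
    set B : Set (EuclideanSpace ℝ (Fin 2)) := W ∩ v with hBdef
    have hAopen : IsOpen A := hWopen.inter hu
    have hBopen : IsOpen B := hWopen.inter hv
    have hABdisj : Disjoint A B := by
      rw [Set.disjoint_left]
      intro x hxA hxB
      have : x ∈ W ∩ (u ∩ v) := ⟨hxA.1, hxA.2, hxB.2⟩
      rw [hemp] at this
      exact this
    have hAB : A ∪ B = W := by
      rw [hAdef, hBdef, ← Set.inter_union_distrib_left]
      exact Set.inter_eq_left.mpr hcov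
    obtain ⟨a₀, ha₀⟩ := hWu
    obtain ⟨b₀, hb₀⟩ := hWv
    have ha₀A : a₀ ∈ A := ha₀
    have hb₀B : b₀ ∈ B := hb₀
    -- Urysohn function
    obtain ⟨φ, hφ0, hφ1, hφ01⟩ := exists_continuous_zero_one_of_isClosed hF hG hdisj
    -- the glued circle-valued map
    set f : EuclideanSpace ℝ (Fin 2) → ℂ := fun x =>
      if x ∈ B then Complex.exp (-(Real.pi * φ x : ℝ) * Complex.I)
      else Complex.exp ((Real.pi * φ x : ℝ) * Complex.I) with hfdef
    -- frontier of B avoids A and B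
    have hfrontB : frontier B ⊆ F ∪ G := by
      intro a ha
      have ha' : a ∈ closure B \ B := by rw [← hBopen.frontier_eq]; exact ha
      have haB : a ∉ B := ha'.2
      have haA : a ∉ A := by
        intro hA
        have h1 : Disjoint A (closure B) := hABdisj.closure_right hAopen
        exact Set.disjoint_left.mp h1 hA ha'.1
      by_contra hFG
      have : a ∈ W := fun h => hFG h
      rw [← hAB] at this
      rcases this with h | h
      · exact haA h
      · exact haB h
    have hBW : B ⊆ W := Set.inter_subset_left
    have hAW : A ⊆ W := Set.inter_subset_left
    have hfc : Continuous f := by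
      apply Continuous.if
      · intro a ha
        rcases hfrontB ha with hFa | hGa
        · have : φ a = 0 := hφ0 hFa
          simp [this]
        · have : φ a = 1 := hφ1 hGa
          rw [this]
          push_cast
          rw [mul_one, neg_mul, Complex.exp_neg, Complex.exp_pi_mul_I]
          norm_num
      · exact Complex.continuous_exp.comp
          ((Complex.continuous_ofReal.comp (continuous_const.mul φ.continuous)).neg.mul
            continuous_const)
      · exact Complex.continuous_exp.comp
          ((Complex.continuous_ofReal.comp (continuous_const.mul φ.continuous)).mul
            continuous_const)
    have hfne : ∀ x, f x ≠ 0 := by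
      intro x
      simp only [hfdef]
      split <;> exact Complex.exp_ne_zero _
    obtain ⟨g, hgc, hge⟩ := exists_log_global f hfc hfne
    set r : EuclideanSpace ℝ (Fin 2) → ℝ := fun x => (g x).im / Real.pi with hrdef
    have hrc : Continuous r := (Complex.continuous_im.comp hgc).div_const _
    have hπ : (Real.pi : ℝ) ≠ 0 := Real.pi_ne_zero
    -- pointwise integrality facts
    have fact_notB : ∀ x, x ∉ B → ∃ k : ℤ, r x - φ x = 2 * k := by
      intro x hx
      have hfx : f x = Complex.exp ((Real.pi * φ x : ℝ) * Complex.I) := by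
        rw [hfdef]; simp [hx]
      have : Complex.exp (g x) = Complex.exp ((Real.pi * φ x : ℝ) * Complex.I) := by
        rw [hge x, hfx]
      obtain ⟨k, hk⟩ := Complex.exp_eq_exp_iff_exists_int.mp this
      refine ⟨k, ?_⟩
      have him : (g x).im = Real.pi * φ x + k * (2 * Real.pi) := by
        rw [hk]
        simp [Complex.add_im, Complex.mul_im]
      simp only [hrdef]
      rw [him]
      field_simp
      ring
    have fact_B : ∀ x, x ∈ B → ∃ k : ℤ, r x + φ x = 2 * k := by
      intro x hx
      have hfx : f x = Complex.exp (-(Real.pi * φ x : ℝ) * Complex.I) := by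
        rw [hfdef]; simp [hx]
      have : Complex.exp (g x) = Complex.exp (-(Real.pi * φ x : ℝ) * Complex.I) := by
        rw [hge x, hfx]
      obtain ⟨k, hk⟩ := Complex.exp_eq_exp_iff_exists_int.mp this
      refine ⟨k, ?_⟩
      have him : (g x).im = -(Real.pi * φ x) + k * (2 * Real.pi) := by
        rw [hk]
        simp [Complex.add_im, Complex.mul_im]
      simp only [hrdef]
      rw [him]
      field_simp
      ring
    -- the two locally constant integer functions
    set k₁ : EuclideanSpace ℝ (Fin 2) → ℝ := fun x =>
      if x ∈ B then r x + φ x else r x - φ x with hk₁def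
    set k₂ : EuclideanSpace ℝ (Fin 2) → ℝ := fun x =>
      if x ∈ B then r x + φ x - 2 else r x - φ x with hk₂def
    have hk₁int : ∀ x, ∃ n : ℤ, k₁ x = n := by
      intro x
      simp only [hk₁def]
      by_cases hx : x ∈ B
      · obtain ⟨k, hk⟩ := fact_B x hx
        exact ⟨2 * k, by rw [if_pos hx]; push_cast; linarith⟩
      · obtain ⟨k, hk⟩ := fact_notB x hx
        exact ⟨2 * k, by rw [if_neg hx]; push_cast; linarith⟩
    have hk₂int : ∀ x, ∃ n : ℤ, k₂ x = n := by
      intro x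
      simp only [hk₂def]
      by_cases hx : x ∈ B
      · obtain ⟨k, hk⟩ := fact_B x hx
        exact ⟨2 * k - 2, by rw [if_pos hx]; push_cast; linarith⟩
      · obtain ⟨k, hk⟩ := fact_notB x hx
        exact ⟨2 * k, by rw [if_neg hx]; push_cast; linarith⟩
    -- continuity of k₁ on Gᶜ
    have hk₁c : ContinuousOn k₁ Gᶜ := by
      apply ContinuousOn.if
      · intro a ha
        have haF : a ∈ F := by
          rcases hfrontB ha.2 with h | h
          · exact h
          · exact absurd h ha.1
        have : φ a = 0 := hφ0 haF
        simp [this]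
      · exact ((hrc.add φ.continuous).continuousOn).mono Set.inter_subset_left |>.congr
          (fun x _ => rfl)
      · exact ((hrc.sub φ.continuous).continuousOn).mono Set.inter_subset_left |>.congr
          (fun x _ => rfl)
    have hk₂c : ContinuousOn k₂ Fᶜ := by
      apply ContinuousOn.if
      · intro a ha
        have haG : a ∈ G := by
          rcases hfrontB ha.2 with h | h
          · exact absurd h ha.1
          · exact h
        have : φ a = 1 := hφ1 haG
        simp [this]
        ring
      · exact (((hrc.add φ.continuous).sub continuous_const).continuousOn).mono
          Set.inter_subset_left |>.congr (fun x _ => rfl)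
      · exact ((hrc.sub φ.continuous).continuousOn).mono Set.inter_subset_left |>.congr
          (fun x _ => rfl)
    -- members
    have hWG : W ⊆ Gᶜ := fun x hx => fun h => hx (Set.mem_union_right _ h)
    have hWF : W ⊆ Fᶜ := fun x hx => fun h => hx (Set.mem_union_left _ h)
    have ha₀G : a₀ ∈ Gᶜ := hWG (hAW ha₀A)
    have hb₀G : b₀ ∈ Gᶜ := hWG (hBW hb₀B)
    have ha₀F : a₀ ∈ Fᶜ := hWF (hAW ha₀A)
    have hb₀F : b₀ ∈ Fᶜ := hWF (hBW hb₀B)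
    have ha₀B : a₀ ∉ B := Set.disjoint_left.mp hABdisj ha₀A
    -- constancy
    have e₁ : k₁ a₀ = k₁ b₀ :=
      intValued_constOn hGc.isPreconnected hk₁c (fun x _ => hk₁int x) ha₀G hb₀G
    have e₂ : k₂ a₀ = k₂ b₀ :=
      intValued_constOn hFc.isPreconnected hk₂c (fun x _ => hk₂int x) ha₀F hb₀F
    simp only [hk₁def] at e₁
    simp only [hk₂def] at e₂
    rw [if_neg ha₀B, if_pos hb₀B] at e₁ e₂
    linarith
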